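/- arXiv:1512.06839 — 4 statements merged into one kernel-verified Lean document; each statement's English description precedes it below -/
import Mathlib

section
/- For any word w that is a nonempty product of n matrices from {L, R}, the trace of w is at most φⁿ + 1, where φ = (1+√5)/2 is the golden ratio. -/
open Matrix

def Lmat : Matrix (Fin 2) (Fin 2) ℤ := !![1, 1; 0, 1]
def Rmat : Matrix (Fin 2) (Fin 2) ℤ := !![1, 0; 1, 1]

lemma entry_nonneg_of_mem (M : Matrix (Fin 2) (Fin 2) ℤ) (h : M = Lmat ∨ M = Rmat)
    (i j : Fin 2) : 0 ≤ M i j := by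
  rcases h with h | h <;> subst h <;> fin_cases i <;> fin_cases j <;>
    norm_num [Lmat, Rmat]

lemma prod_entry_nonneg (l : List (Matrix (Fin 2) (Fin 2) ℤ))
    (hl : ∀ M ∈ l, M = Lmat ∨ M = Rmat) (i j : Fin 2) : 0 ≤ l.prod i j := by
  induction l generalizing i j with
  | nil => simp [Matrix.one_apply]; split <;> norm_num
  | cons M t ih =>
    rw [List.prod_cons, Matrix.mul_apply]
    refine Finset.sum_nonneg fun k _ => mul_nonneg ?_ ?_
    · exact entry_nonneg_of_mem M (hl M (List.mem_cons_self (a := M) (l := t))) i k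
    · exact ih (fun N hN => hl N (List.mem_cons_of_mem M hN)) k j

lemma prod_det_one (l : List (Matrix (Fin 2) (Fin 2) ℤ))
    (hl : ∀ M ∈ l, M = Lmat ∨ M = Rmat) : l.prod.det = 1 := by
  induction l with
  | nil => simp
  | cons M t ih =>
    rw [List.prod_cons, Matrix.det_mul, ih (fun N hN => hl N (List.mem_cons_of_mem M hN))]
    rcases hl M (List.mem_cons_self (a := M) (l := t)) with h | h <;> subst h <;>
      simp [Lmat, Rmat, Matrix.det_fin_two_of]

lemma arith_step (p T u X : ℝ) (hp2 : p ^ 2 = 3 * p - 1) (hp1 : 5/2 ≤ p) (hp3 : p ≤ 3)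
    (hT : 1 ≤ T) (hu : u ≤ T ^ 2 + 1) (hXu : u ≤ X)
    (hq : X ^ 2 - 3 * u * X + u ^ 2 + 5 * T ^ 2 ≤ 0) :
    X ≤ p * T ^ 2 + (3 - p) := by
  by_contra hcon
  push_neg at hcon
  have hXB : (3 - p) * T ^ 2 + p < X := by nlinarith
  have heq : (X - (p * T ^ 2 + (3 - p))) * (X - ((3 - p) * T ^ 2 + p))
      = X ^ 2 - 3 * (T ^ 2 + 1) * X + (T ^ 2 + 1) ^ 2 + 5 * T ^ 2 := by
    linear_combination (2 * T ^ 2 - T ^ 4 - 1) * hp2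
  have h3 : 0 < X ^ 2 - 3 * (T ^ 2 + 1) * X + (T ^ 2 + 1) ^ 2 + 5 * T ^ 2 := by
    rw [← heq]; exact mul_pos (by linarith) (by linarith)
  have h4 : 0 ≤ 3 * X - ((T ^ 2 + 1) + u) := by nlinarith
  nlinarith [mul_nonneg (sub_nonneg.mpr hu) h4]

lemma real_step (a b c d t : ℝ) (ha : 0 ≤ a) (hb : 0 ≤ b) (hc : 0 ≤ c) (hd : 0 ≤ d)
    (hdet : a * d - b * c = 1) (ht : 1 ≤ t)
    (ih : (a ^ 2 + b ^ 2 + c ^ 2 + d ^ 2) * t ^ 2 ≤ t ^ 4 + 1) :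
    ((a + c) ^ 2 + (b + d) ^ 2 + c ^ 2 + d ^ 2) * (t * ((1 + Real.sqrt 5) / 2)) ^ 2
      ≤ (t * ((1 + Real.sqrt 5) / 2)) ^ 4 + 1 := by
  set s := Real.sqrt 5 with hsdef
  have hs0 : 0 ≤ s := Real.sqrt_nonneg 5
  have hs5 : s ^ 2 = 5 := Real.sq_sqrt (by norm_num)
  have hs2 : 2 ≤ s := by nlinarith
  have hs3 : s ≤ 5/2 := by nlinarith
  set p := (3 + s) / 2 with hpdef
  have hp2 : p ^ 2 = 3 * p - 1 := by rw [hpdef]; linear_combination hs5 / 4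
  have hp1 : 5/2 ≤ p := by rw [hpdef]; linarith
  have hp3 : p ≤ 3 := by rw [hpdef]; linarith
  have hp0 : (0:ℝ) ≤ p := by linarith
  set S := a ^ 2 + b ^ 2 + c ^ 2 + d ^ 2 with hSdef
  set S' := (a + c) ^ 2 + (b + d) ^ 2 + c ^ 2 + d ^ 2 with hS'def
  have hq0 : S' ^ 2 - 3 * S * S' + S ^ 2 + 5 ≤ 0 := by
    have heq : S' ^ 2 - 3 * S * S' + S ^ 2 + 5
        = -(a ^ 2 + b ^ 2 + a * c + b * d - c ^ 2 - d ^ 2) ^ 2 := by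
      rw [hSdef, hS'def]
      linear_combination (-5 * (a * d - b * c + 1)) * hdet
    rw [heq]
    exact neg_nonpos.mpr (sq_nonneg _)
  have hSS' : S ≤ S' := by
    rw [hSdef, hS'def]
    nlinarith [mul_nonneg ha hc, mul_nonneg hb hd, sq_nonneg c, sq_nonneg d]
  have ht0 : (0:ℝ) < t := by linarith
  have hT : 1 ≤ t ^ 2 := by nlinarith
  have hq : (t ^ 2 * S') ^ 2 - 3 * (t ^ 2 * S) * (t ^ 2 * S') + (t ^ 2 * S) ^ 2
      + 5 * (t ^ 2) ^ 2 ≤ 0 := by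
    have heq2 : (t ^ 2 * S') ^ 2 - 3 * (t ^ 2 * S) * (t ^ 2 * S') + (t ^ 2 * S) ^ 2
        + 5 * (t ^ 2) ^ 2 = (t ^ 2) ^ 2 * (S' ^ 2 - 3 * S * S' + S ^ 2 + 5) := by ring
    rw [heq2]
    exact mul_nonpos_of_nonneg_of_nonpos (sq_nonneg _) hq0
  have hu : t ^ 2 * S ≤ (t ^ 2) ^ 2 + 1 := by linarith [ih]
  have hXu : t ^ 2 * S ≤ t ^ 2 * S' := mul_le_mul_of_nonneg_left hSS' (sq_nonneg t)
  have harith := arith_step p (t ^ 2) (t ^ 2 * S) (t ^ 2 * S') hp2 hp1 hp3 hT hu hXu hq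
  have hmul := mul_le_mul_of_nonneg_left harith hp0
  have hrhs : p * (p * (t ^ 2) ^ 2 + (3 - p)) = p ^ 2 * t ^ 4 + 1 := by
    linear_combination (-1 : ℝ) * hp2
  have hfin : p * (t ^ 2 * S') ≤ p ^ 2 * t ^ 4 + 1 := by
    calc p * (t ^ 2 * S') ≤ p * (p * (t ^ 2) ^ 2 + (3 - p)) := hmul
    _ = p ^ 2 * t ^ 4 + 1 := hrhs
  have hphi : ((1 + s) / 2) ^ 2 = p := by rw [hpdef]; linear_combination hs5 / 4
  calc S' * (t * ((1 + s) / 2)) ^ 2 = p * (t ^ 2 * S') := by rw [← hphi]; ring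
  _ ≤ p ^ 2 * t ^ 4 + 1 := hfin
  _ = (t * ((1 + s) / 2)) ^ 4 + 1 := by rw [← hphi]; ring

lemma key_bound (l : List (Matrix (Fin 2) (Fin 2) ℤ))
    (hl : ∀ M ∈ l, M = Lmat ∨ M = Rmat) :
    (((l.prod 0 0 : ℤ) : ℝ) ^ 2 + ((l.prod 0 1 : ℤ) : ℝ) ^ 2
      + ((l.prod 1 0 : ℤ) : ℝ) ^ 2 + ((l.prod 1 1 : ℤ) : ℝ) ^ 2)
      * (((1 + Real.sqrt 5) / 2) ^ l.length) ^ 2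
      ≤ (((1 + Real.sqrt 5) / 2) ^ l.length) ^ 4 + 1 := by
  have hs0 : 0 ≤ Real.sqrt 5 := Real.sqrt_nonneg 5
  have hs5 : (Real.sqrt 5) ^ 2 = 5 := Real.sq_sqrt (by norm_num)
  have hs2 : 2 ≤ Real.sqrt 5 := by nlinarith
  have hphi1 : (1:ℝ) ≤ (1 + Real.sqrt 5) / 2 := by linarith
  revert hl
  induction l with
  | nil =>
    intro _
    simp [Matrix.one_apply]
  | cons M r ih =>
    intro hl
    have hlr : ∀ N ∈ r, N = Lmat ∨ N = Rmat := fun N hN => hl N (List.mem_cons_of_mem M hN)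
    have ih' := ih hlr
    have ha := prod_entry_nonneg r hlr 0 0
    have hb := prod_entry_nonneg r hlr 0 1
    have hc := prod_entry_nonneg r hlr 1 0
    have hd := prod_entry_nonneg r hlr 1 1
    have hdet : r.prod 0 0 * r.prod 1 1 - r.prod 0 1 * r.prod 1 0 = 1 := by
      have h := prod_det_one r hlr
      rwa [Matrix.det_fin_two] at h
    have ht1 : (1:ℝ) ≤ ((1 + Real.sqrt 5) / 2) ^ r.length := one_le_pow₀ hphi1
    have ha' : (0:ℝ) ≤ (r.prod 0 0 : ℝ) := by exact_mod_cast ha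
    have hb' : (0:ℝ) ≤ (r.prod 0 1 : ℝ) := by exact_mod_cast hb
    have hc' : (0:ℝ) ≤ (r.prod 1 0 : ℝ) := by exact_mod_cast hc
    have hd' : (0:ℝ) ≤ (r.prod 1 1 : ℝ) := by exact_mod_cast hd
    have hdet' : ((r.prod 0 0 : ℤ) : ℝ) * (r.prod 1 1 : ℝ)
        - (r.prod 0 1 : ℝ) * (r.prod 1 0 : ℝ) = 1 := by exact_mod_cast hdet
    have hdet'' : ((r.prod 1 1 : ℤ) : ℝ) * (r.prod 0 0 : ℝ)
        - (r.prod 1 0 : ℝ) * (r.prod 0 1 : ℝ) = 1 := by linarith [hdet']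
    rw [List.prod_cons, List.length_cons]
    rcases hl M (List.mem_cons_self (a := M) (l := r)) with hM | hM <;> subst hM
    · have e00 : (Lmat * r.prod) 0 0 = r.prod 0 0 + r.prod 1 0 := by
        simp [Lmat, Matrix.mul_apply, Fin.sum_univ_two]
      have e01 : (Lmat * r.prod) 0 1 = r.prod 0 1 + r.prod 1 1 := by
        simp [Lmat, Matrix.mul_apply, Fin.sum_univ_two]
      have e10 : (Lmat * r.prod) 1 0 = r.prod 1 0 := by
        simp [Lmat, Matrix.mul_apply, Fin.sum_univ_two]
      have e11 : (Lmat * r.prod) 1 1 = r.prod 1 1 := by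
        simp [Lmat, Matrix.mul_apply, Fin.sum_univ_two]
      rw [e00, e01, e10, e11]
      push_cast
      have hstep := real_step (r.prod 0 0 : ℝ) (r.prod 0 1 : ℝ) (r.prod 1 0 : ℝ)
        (r.prod 1 1 : ℝ) (((1 + Real.sqrt 5) / 2) ^ r.length)
        ha' hb' hc' hd' hdet' ht1 (by linarith [ih'])
      refine le_trans (le_of_eq ?_) (le_trans hstep (le_of_eq ?_)) <;> ring
    · have e00 : (Rmat * r.prod) 0 0 = r.prod 0 0 := by
        simp [Rmat, Matrix.mul_apply, Fin.sum_univ_two]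
      have e01 : (Rmat * r.prod) 0 1 = r.prod 0 1 := by
        simp [Rmat, Matrix.mul_apply, Fin.sum_univ_two]
      have e10 : (Rmat * r.prod) 1 0 = r.prod 0 0 + r.prod 1 0 := by
        simp [Rmat, Matrix.mul_apply, Fin.sum_univ_two]
      have e11 : (Rmat * r.prod) 1 1 = r.prod 0 1 + r.prod 1 1 := by
        simp [Rmat, Matrix.mul_apply, Fin.sum_univ_two]
      rw [e00, e01, e10, e11]
      push_cast
      have hstep := real_step (r.prod 1 1 : ℝ) (r.prod 1 0 : ℝ) (r.prod 0 1 : ℝ)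
        (r.prod 0 0 : ℝ) (((1 + Real.sqrt 5) / 2) ^ r.length)
        hd' hc' hb' ha' hdet'' ht1 (by linarith [ih'])
      refine le_trans (le_of_eq ?_) (le_trans hstep (le_of_eq ?_)) <;> ring

theorem trace_le_golden_pow (l : List (Matrix (Fin 2) (Fin 2) ℤ))
    (hl : ∀ M ∈ l, M = Lmat ∨ M = Rmat) (hne : l ≠ []) :
    ((l.prod.trace : ℤ) : ℝ) ≤ ((1 + Real.sqrt 5) / 2) ^ l.length + 1 := by
  have hs0 : 0 ≤ Real.sqrt 5 := Real.sqrt_nonneg 5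
  have hs5 : (Real.sqrt 5) ^ 2 = 5 := Real.sq_sqrt (by norm_num)
  have hs2 : 2 ≤ Real.sqrt 5 := by nlinarith
  have hphi1 : (1:ℝ) ≤ (1 + Real.sqrt 5) / 2 := by linarith
  have ht1 : (1:ℝ) ≤ ((1 + Real.sqrt 5) / 2) ^ l.length := one_le_pow₀ hphi1
  set t := ((1 + Real.sqrt 5) / 2) ^ l.length with htdef
  have hkey := key_bound l hl
  have ha := prod_entry_nonneg l hl 0 0
  have hb := prod_entry_nonneg l hl 0 1
  have hc := prod_entry_nonneg l hl 1 0
  have hd := prod_entry_nonneg l hl 1 1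
  have hdet : l.prod 0 0 * l.prod 1 1 - l.prod 0 1 * l.prod 1 0 = 1 := by
    have h := prod_det_one l hl
    rwa [Matrix.det_fin_two] at h
  have ha' : (0:ℝ) ≤ (l.prod 0 0 : ℝ) := by exact_mod_cast ha
  have hd' : (0:ℝ) ≤ (l.prod 1 1 : ℝ) := by exact_mod_cast hd
  have hdet' : ((l.prod 0 0 : ℤ) : ℝ) * (l.prod 1 1 : ℝ)
      - (l.prod 0 1 : ℝ) * (l.prod 1 0 : ℝ) = 1 := by exact_mod_cast hdet
  set a := ((l.prod 0 0 : ℤ) : ℝ)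
  set b := ((l.prod 0 1 : ℤ) : ℝ)
  set c := ((l.prod 1 0 : ℤ) : ℝ)
  set d := ((l.prod 1 1 : ℤ) : ℝ)
  have h1 : (a + d) ^ 2 ≤ (a ^ 2 + b ^ 2 + c ^ 2 + d ^ 2) + 2 := by
    nlinarith [sq_nonneg (b - c), hdet']
  have h2 : ((a + d) * t) ^ 2 ≤ (t ^ 2 + 1) ^ 2 := by
    nlinarith [mul_le_mul_of_nonneg_right h1 (sq_nonneg t), hkey]
  have hadt : 0 ≤ (a + d) * t := by positivity
  have ht0 : (0:ℝ) < t := by linarith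
  have h3 : (a + d) * t ≤ t ^ 2 + 1 := by nlinarith [h2, hadt, sq_nonneg t]
  have h4 : (a + d) * t ≤ (t + 1) * t := by nlinarith [h3, ht1]
  have h5 : a + d ≤ t + 1 := le_of_mul_le_mul_right h4 ht0
  have htr : l.prod.trace = l.prod 0 0 + l.prod 1 1 := Matrix.trace_fin_two l.prod
  rw [htr]
  push_cast
  exact h5
end

section
/- Let w be a product of n ≥ 1 matrices from {L, R} such that w contains at least one L and at least one R factor (i.e., w is not a power of L nor a power of R). Then tr(w) ≥ n + 1. -/
open Matrix

lemma Lmat_ne_Rmat : Lmat ≠ Rmat := by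
  intro h
  have := congrFun (congrFun h 0) 1
  simp [Lmat, Rmat] at this

lemma aux_trace (l : List (Matrix (Fin 2) (Fin 2) ℤ)) (hne : l ≠ [])
    (hl : ∀ M ∈ l, M = Lmat ∨ M = Rmat) :
    1 ≤ l.prod 0 0 ∧ 1 ≤ l.prod 1 1 ∧ 0 ≤ l.prod 0 1 ∧ 0 ≤ l.prod 1 0 ∧
    (Lmat ∈ l → 1 ≤ l.prod 0 1) ∧ (Rmat ∈ l → 1 ≤ l.prod 1 0) ∧
    (Lmat ∉ l → (l.length : ℤ) ≤ l.prod 1 0) ∧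
    (Rmat ∉ l → (l.length : ℤ) ≤ l.prod 0 1) ∧
    (Lmat ∈ l → Rmat ∈ l → (l.length : ℤ) + 1 ≤ l.prod 0 0 + l.prod 1 1) := by
  induction l with
  | nil => exact absurd rfl hne
  | cons M t ih =>
    rcases eq_or_ne t [] with ht | ht
    · subst ht
      rcases hl M (List.mem_cons_self) with hM | hM <;> subst hM <;>
        simp only [List.prod_singleton, List.mem_singleton, List.length_singleton]
      all_goals
        refine ⟨by simp [Lmat, Rmat], by simp [Lmat, Rmat], by simp [Lmat, Rmat],
          by simp [Lmat, Rmat], ?_, ?_, ?_, ?_, ?_⟩ <;> intro h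
      · simp [Lmat]
      · exact absurd h.symm Lmat_ne_Rmat
      · exact absurd trivial h
      · simp [Lmat]
      · intro hc; exact absurd hc.symm Lmat_ne_Rmat
      · exact absurd h Lmat_ne_Rmat
      · simp [Rmat]
      · simp [Rmat]
      · exact absurd trivial h
      · intro _; exact absurd h Lmat_ne_Rmat
    obtain ⟨h1, h2, h3, h4, h5, h6, h7, h8, h9⟩ :=
      ih ht (fun N hN => hl N (List.mem_cons_of_mem _ hN))
    have hlen : (1:ℤ) ≤ t.length := by exact_mod_cast List.length_pos_iff.mpr ht
    rcases hl M (List.mem_cons_self) with hM | hM <;> subst hM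
    · -- prepend Lmat
      have e00 : ((Lmat :: t).prod) 0 0 = t.prod 0 0 + t.prod 1 0 := by
        simp [List.prod_cons, Matrix.mul_apply, Fin.sum_univ_two, Lmat]
      have e01 : ((Lmat :: t).prod) 0 1 = t.prod 0 1 + t.prod 1 1 := by
        simp [List.prod_cons, Matrix.mul_apply, Fin.sum_univ_two, Lmat]
      have e10 : ((Lmat :: t).prod) 1 0 = t.prod 1 0 := by
        simp [List.prod_cons, Matrix.mul_apply, Fin.sum_univ_two, Lmat]
      have e11 : ((Lmat :: t).prod) 1 1 = t.prod 1 1 := by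
        simp [List.prod_cons, Matrix.mul_apply, Fin.sum_univ_two, Lmat]
      rw [e00, e01, e10, e11]
      simp only [List.length_cons, List.mem_cons]
      push_cast
      refine ⟨by linarith, h2, by linarith, h4, fun _ => by linarith,
        ?_, ?_, ?_, ?_⟩
      · rintro (h | h)
        · exact absurd h.symm Lmat_ne_Rmat
        · exact h6 h
      · intro h; exact absurd (Or.inl trivial) h
      · intro h
        have hRt : Rmat ∉ t := fun hc => h (Or.inr hc)
        have := h8 hRt
        linarith
      · rintro - (h | hRt)
        · exact absurd h.symm Lmat_ne_Rmat
        · by_cases hLt : Lmat ∈ t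
          · have := h9 hLt hRt
            have := h6 hRt
            linarith
          · have := h7 hLt
            linarith
    · -- prepend Rmat
      have e00 : ((Rmat :: t).prod) 0 0 = t.prod 0 0 := by
        simp [List.prod_cons, Matrix.mul_apply, Fin.sum_univ_two, Rmat]
      have e01 : ((Rmat :: t).prod) 0 1 = t.prod 0 1 := by
        simp [List.prod_cons, Matrix.mul_apply, Fin.sum_univ_two, Rmat]
      have e10 : ((Rmat :: t).prod) 1 0 = t.prod 0 0 + t.prod 1 0 := by
        simp [List.prod_cons, Matrix.mul_apply, Fin.sum_univ_two, Rmat]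
      have e11 : ((Rmat :: t).prod) 1 1 = t.prod 0 1 + t.prod 1 1 := by
        simp [List.prod_cons, Matrix.mul_apply, Fin.sum_univ_two, Rmat]
      rw [e00, e01, e10, e11]
      simp only [List.length_cons, List.mem_cons]
      push_cast
      refine ⟨h1, by linarith, h3, by linarith, ?_, fun _ => by linarith,
        ?_, ?_, ?_⟩
      · rintro (h | h)
        · exact absurd h Lmat_ne_Rmat
        · exact h5 h
      · intro h
        have hLt : Lmat ∉ t := fun hc => h (Or.inr hc)
        have := h7 hLt
        linarith
      · intro h; exact absurd (Or.inl trivial) h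
      · rintro (h | hLt) -
        · exact absurd h Lmat_ne_Rmat
        · by_cases hRt : Rmat ∈ t
          · have := h9 hLt hRt
            have := h5 hLt
            linarith
          · have := h8 hRt
            linarith

theorem trace_ge_length_succ (l : List (Matrix (Fin 2) (Fin 2) ℤ))
    (hl : ∀ M ∈ l, M = Lmat ∨ M = Rmat) (hL : Lmat ∈ l) (hR : Rmat ∈ l) :
    l.prod.trace ≥ (l.length : ℤ) + 1 := by
  have hne : l ≠ [] := List.ne_nil_of_mem hL
  obtain ⟨h1, h2, h3, h4, h5, h6, h7, h8, h9⟩ := aux_trace l hne hl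
  rw [Matrix.trace_fin_two]
  exact h9 hL hR
end

section
/- Let w' be a word in {L, R} obtained from a word w by inserting additional letters from {L, R} at arbitrary positions. Then tr(w') ≥ tr(w). -/
open Matrix

lemma lr_nonneg {M : Matrix (Fin 2) (Fin 2) ℤ} (h : M = Lmat ∨ M = Rmat) :
    ∀ i j, 0 ≤ M i j := by
  rcases h with h | h <;> subst h <;> intro i j <;> fin_cases i <;> fin_cases j <;>
    simp [Lmat, Rmat]

lemma prod_nonneg (l : List (Matrix (Fin 2) (Fin 2) ℤ))
    (hl : ∀ M ∈ l, M = Lmat ∨ M = Rmat) : ∀ i j, 0 ≤ l.prod i j := by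
  induction l with
  | nil => intro i j; fin_cases i <;> fin_cases j <;> simp [Matrix.one_apply]
  | cons M t ih =>
    intro i j
    rw [List.prod_cons, Matrix.mul_apply]
    refine Finset.sum_nonneg fun k _ => mul_nonneg ?_ ?_
    · exact lr_nonneg (hl M (List.mem_cons_self)) i k
    · exact ih (fun N hN => hl N (List.mem_cons_of_mem _ hN)) k j

lemma mul_le_mul_of_le {M A B : Matrix (Fin 2) (Fin 2) ℤ}
    (hM : ∀ i j, 0 ≤ M i j) (hAB : ∀ i j, A i j ≤ B i j) :
    ∀ i j, (M * A) i j ≤ (M * B) i j := by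
  intro i j
  rw [Matrix.mul_apply, Matrix.mul_apply]
  exact Finset.sum_le_sum fun k _ => mul_le_mul_of_nonneg_left (hAB k j) (hM i k)

lemma le_lr_mul {M A : Matrix (Fin 2) (Fin 2) ℤ}
    (hM : M = Lmat ∨ M = Rmat) (hA : ∀ i j, 0 ≤ A i j) :
    ∀ i j, A i j ≤ (M * A) i j := by
  intro i j
  rcases hM with h | h <;> subst h <;> fin_cases i <;> fin_cases j <;>
    simp [Matrix.mul_apply, Fin.sum_univ_two, Lmat, Rmat] <;>
    linarith [hA 0 0, hA 0 1, hA 1 0, hA 1 1]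

lemma prod_entry_mono (l l' : List (Matrix (Fin 2) (Fin 2) ℤ))
    (hl' : ∀ M ∈ l', M = Lmat ∨ M = Rmat) (hsub : l.Sublist l') :
    ∀ i j, l.prod i j ≤ l'.prod i j := by
  induction hsub with
  | slnil => intro i j; exact le_refl _
  | @cons t t' M hsub ih =>
    intro i j
    have hM := hl' M (List.mem_cons_self)
    have hl'' : ∀ N ∈ t', N = Lmat ∨ N = Rmat :=
      fun N hN => hl' N (List.mem_cons_of_mem _ hN)
    have h1 := ih hl'' i j
    have h2 := le_lr_mul hM (prod_nonneg t' hl'') i j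
    rw [List.prod_cons]
    exact le_trans h1 h2
  | @cons_cons t t' M hsub ih =>
    intro i j
    have hM := hl' M (List.mem_cons_self)
    have hl'' : ∀ N ∈ t', N = Lmat ∨ N = Rmat :=
      fun N hN => hl' N (List.mem_cons_of_mem _ hN)
    rw [List.prod_cons, List.prod_cons]
    exact mul_le_mul_of_le (lr_nonneg hM) (ih hl'') i j

theorem trace_mono_insertion (l l' : List (Matrix (Fin 2) (Fin 2) ℤ))
    (hl' : ∀ M ∈ l', M = Lmat ∨ M = Rmat) (hsub : l.Sublist l') :
    l'.prod.trace ≥ l.prod.trace := by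
  have h := prod_entry_mono l l' hl' hsub
  simp only [Matrix.trace, Matrix.diag, Fin.sum_univ_two, ge_iff_le]
  exact add_le_add (h 0 0) (h 1 1)
end

section
/- Define N(m) = ∑_{k=3}^{m} n(k), where n(k) is the number of 2x2 integer matrices with determinant 1, nonnegative entries, and trace k. Then N(m) = O(m² log m), i.e., there exists a constant C such that N(m) ≤ C·m²·log m for all m ≥ 3. -/
open Matrix

/-- The target finset: tuples `(a, d, e, flag)`. -/
def Wf (m : ℕ) : Finset (ℕ × ℕ × ℕ × Bool) :=
  ((Finset.Icc 1 m) ×ˢ (Finset.Icc 1 m) ×ˢ (Finset.Icc 1 m) ×ˢ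
      (Finset.univ : Finset Bool)).filter
    (fun p => p.2.2.1 ∣ p.1 * p.2.1 - 1)

lemma key_le {a d d' e : ℕ} (ha : 1 ≤ a) (hd : 1 ≤ d) (he : 1 ≤ e) (hle : d ≤ d')
    (h1 : e ∣ a * d - 1) (h2 : e ∣ a * d' - 1)
    (hq : (d - 1) / e = (d' - 1) / e) : d' ≤ d := by
  have hd' : 1 ≤ d' := le_trans hd hle
  have hx : 1 ≤ a * d := Nat.one_le_iff_ne_zero.mpr (Nat.mul_ne_zero (by omega) (by omega))
  have hy : a * d ≤ a * d' := Nat.mul_le_mul_left a hle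
  have hg : Nat.Coprime a e := by
    have g1 : Nat.gcd a e ∣ a * d := (Nat.gcd_dvd_left a e).mul_right d
    have g2 : Nat.gcd a e ∣ a * d - 1 := (Nat.gcd_dvd_right a e).trans h1
    have g3 : Nat.gcd a e ∣ 1 := by
      have h := Nat.dvd_sub g1 g2
      rwa [Nat.sub_sub_self hx] at h
    exact Nat.dvd_one.mp g3
  have h3 : e ∣ a * (d' - d) := by
    have h := Nat.dvd_sub h2 h1
    rwa [show a * d' - 1 - (a * d - 1) = a * (d' - d) by
      zify [hx, le_trans hx hy, hle, Nat.sub_le_sub_right hy 1]; ring] at h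
  have h4 : e ∣ d' - d := hg.symm.dvd_of_dvd_mul_left h3
  obtain ⟨s, hs⟩ := h4
  set t := e * s with ht
  have h5 : d' - 1 = (d - 1) + t := by omega
  have h6 : ((d - 1) + t) / e = (d - 1) / e + s := by
    rw [ht]; exact Nat.add_mul_div_left _ _ (by omega)
  rw [h5, h6] at hq
  have hs0 : s = 0 := by omega
  have ht0 : t = 0 := by rw [ht, hs0, Nat.mul_zero]
  omega

lemma key {a d d' e : ℕ} (ha : 1 ≤ a) (hd : 1 ≤ d) (hd' : 1 ≤ d') (he : 1 ≤ e)
    (h1 : e ∣ a * d - 1) (h2 : e ∣ a * d' - 1)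
    (hq : (d - 1) / e = (d' - 1) / e) : d = d' := by
  rcases le_total d d' with hle | hle
  · exact le_antisymm hle (key_le ha hd he hle h1 h2 hq)
  · exact (le_antisymm hle (key_le ha hd' he hle h2 h1 hq.symm)).symm

lemma fiber_le (m : ℕ) (q : ℕ × ℕ × Bool) (hq : 1 ≤ q.1) (he : 1 ≤ q.2.1) :
    ((Wf m).filter (fun p => (p.1, p.2.2.1, p.2.2.2) = q)).card ≤ m / q.2.1 + 1 := by
  obtain ⟨a, e, fl⟩ := q
  simp only at hq he
  have hcard : (Finset.range (m / e + 1)).card = m / e + 1 := Finset.card_range _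
  rw [← hcard]
  apply Finset.card_le_card_of_injOn (fun p => (p.2.1 - 1) / e)
  · intro p hp
    simp only [Finset.mem_coe, Wf, Finset.mem_filter, Finset.mem_product, Finset.mem_Icc] at hp
    simp only [Finset.mem_coe, Finset.mem_range]
    have hdm : p.2.1 ≤ m := hp.1.1.2.1.2
    have : (p.2.1 - 1) / e ≤ m / e := Nat.div_le_div_right (by omega)
    omega
  · intro p hp p' hp' hdd
    simp only [Finset.mem_coe, Wf, Finset.mem_filter, Finset.mem_product, Finset.mem_Icc,
      Prod.mk.injEq] at hp hp'
    obtain ⟨⟨⟨⟨ha1, _⟩, ⟨hd1, _⟩, ⟨he1, _⟩, _⟩, hdvd⟩, hq1, hq2, hq3⟩ := hp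
    obtain ⟨⟨⟨⟨ha1', _⟩, ⟨hd1', _⟩, ⟨he1', _⟩, _⟩, hdvd'⟩, hq1', hq2', hq3'⟩ := hp'
    have hde : p.2.1 = p'.2.1 := by
      apply key (a := a) (e := e) (by omega) hd1 hd1' he
      · rw [← hq1, ← hq2]; exact hdvd
      · rw [← hq1', ← hq2']; exact hdvd'
      · exact hdd
    have e1 : p.1 = p'.1 := by rw [hq1, hq1']
    have e3 : p.2.2.1 = p'.2.2.1 := by rw [hq2, hq2']
    have e4 : p.2.2.2 = p'.2.2.2 := by rw [hq3, hq3']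
    exact Prod.ext e1 (Prod.ext hde (Prod.ext e3 e4))

lemma cardW (m : ℕ) :
    (Wf m).card ≤ ∑ a ∈ Finset.Icc 1 m, ∑ e ∈ Finset.Icc 1 m, 2 * (m / e + 1) := by
  have hf : ∀ p ∈ Wf m, (p.1, p.2.2.1, p.2.2.2) ∈
      (Finset.Icc 1 m) ×ˢ (Finset.Icc 1 m) ×ˢ (Finset.univ : Finset Bool) := by
    intro p hp
    simp only [Wf, Finset.mem_filter, Finset.mem_product, Finset.mem_Icc] at hp ⊢
    obtain ⟨⟨ha, _, he, _⟩, _⟩ := hp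
    exact ⟨ha, he, Finset.mem_univ _⟩
  rw [Finset.card_eq_sum_card_fiberwise hf, Finset.sum_product]
  apply Finset.sum_le_sum
  intro a ha
  rw [Finset.sum_product]
  apply Finset.sum_le_sum
  intro e he
  simp only [Finset.mem_Icc] at ha he
  have hb : ∀ fl : Bool,
      ((Wf m).filter (fun p => (p.1, p.2.2.1, p.2.2.2) = (a, e, fl))).card ≤ m / e + 1 :=
    fun fl => fiber_le m (a, e, fl) ha.1 he.1
  calc ∑ fl : Bool, ((Wf m).filter (fun p => (p.1, p.2.2.1, p.2.2.2) = (a, e, fl))).card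
      ≤ ∑ _fl : Bool, (m / e + 1) := Finset.sum_le_sum (fun fl _ => hb fl)
    _ = 2 * (m / e + 1) := by simp [Finset.sum_const]

lemma realbound (m : ℕ) (hm : 3 ≤ m) :
    ((∑ a ∈ Finset.Icc 1 m, ∑ e ∈ Finset.Icc 1 m, 2 * (m / e + 1) : ℕ) : ℝ) ≤
      6 * (m : ℝ) ^ 2 * Real.log m := by
  have hm0 : (0 : ℝ) < m := by positivity
  have hlog : 1 ≤ Real.log m := by
    rw [Real.le_log_iff_exp_le hm0]
    calc Real.exp 1 ≤ 3 := le_trans Real.exp_one_lt_d9.le (by norm_num)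
      _ ≤ m := by exact_mod_cast hm
  have hharm : ∑ e ∈ Finset.Icc 1 m, (e : ℝ)⁻¹ ≤ 1 + Real.log m := by
    have h1 : ((harmonic m : ℚ) : ℝ) = ∑ e ∈ Finset.Icc 1 m, (e : ℝ)⁻¹ := by
      rw [harmonic_eq_sum_Icc]; push_cast; rfl
    rw [← h1]; exact harmonic_le_one_add_log m
  have step1 : ((∑ a ∈ Finset.Icc 1 m, ∑ e ∈ Finset.Icc 1 m, 2 * (m / e + 1) : ℕ) : ℝ)
      ≤ ∑ a ∈ Finset.Icc 1 m, ∑ e ∈ Finset.Icc 1 m, (2 * (m : ℝ) * (e : ℝ)⁻¹ + 2) := by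
    push_cast
    apply Finset.sum_le_sum; intro a _
    apply Finset.sum_le_sum; intro e he
    simp only [Finset.mem_Icc] at he
    have h2 : ((m / e : ℕ) : ℝ) ≤ (m : ℝ) / e := Nat.cast_div_le
    have h3 : (m : ℝ) / e = (m : ℝ) * (e : ℝ)⁻¹ := div_eq_mul_inv _ _
    nlinarith [h2]
  have step2 : ∀ a ∈ Finset.Icc 1 m,
      ∑ e ∈ Finset.Icc 1 m, (2 * (m : ℝ) * (e : ℝ)⁻¹ + 2) ≤ 6 * (m : ℝ) * Real.log m := by
    intro a _
    have hcard : (Finset.Icc 1 m).card = m := by simp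
    calc ∑ e ∈ Finset.Icc 1 m, (2 * (m : ℝ) * (e : ℝ)⁻¹ + 2)
        = 2 * (m : ℝ) * (∑ e ∈ Finset.Icc 1 m, (e : ℝ)⁻¹) + 2 * m := by
          rw [Finset.sum_add_distrib, ← Finset.mul_sum, Finset.sum_const, hcard]
          push_cast; ring
      _ ≤ 2 * (m : ℝ) * (1 + Real.log m) + 2 * m := by nlinarith [hharm]
      _ ≤ 6 * (m : ℝ) * Real.log m := by nlinarith [hlog, hm0]
  calc ((∑ a ∈ Finset.Icc 1 m, ∑ e ∈ Finset.Icc 1 m, 2 * (m / e + 1) : ℕ) : ℝ)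
      ≤ ∑ a ∈ Finset.Icc 1 m, ∑ e ∈ Finset.Icc 1 m, (2 * (m : ℝ) * (e : ℝ)⁻¹ + 2) := step1
    _ ≤ ∑ a ∈ Finset.Icc 1 m, 6 * (m : ℝ) * Real.log m := Finset.sum_le_sum step2
    _ = 6 * (m : ℝ) ^ 2 * Real.log m := by
        rw [Finset.sum_const]; simp; ring

lemma entries {k : ℕ} (h3 : 3 ≤ k) {M : Matrix (Fin 2) (Fin 2) ℤ}
    (hdet : M.det = 1) (hpos : ∀ i j, 0 ≤ M i j) (htr : M.trace = (k : ℤ)) :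
    1 ≤ M 0 0 ∧ 1 ≤ M 0 1 ∧ 1 ≤ M 1 0 ∧ 1 ≤ M 1 1 ∧
      M 0 0 + M 1 1 = (k : ℤ) ∧ M 0 1 * M 1 0 = M 0 0 * M 1 1 - 1 := by
  rw [Matrix.det_fin_two] at hdet
  rw [Matrix.trace_fin_two] at htr
  have ha := hpos 0 0; have hb := hpos 0 1; have hc := hpos 1 0; have hd := hpos 1 1
  have hk3 : (3 : ℤ) ≤ k := by exact_mod_cast h3
  have hbc : 0 ≤ M 0 1 * M 1 0 := mul_nonneg hb hc
  have had : 1 ≤ M 0 0 * M 1 1 := by linarith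
  have ha1 : 1 ≤ M 0 0 := by
    by_contra h
    push_neg at h
    have h0 : M 0 0 = 0 := by omega
    rw [h0, zero_mul] at had; omega
  have hd1 : 1 ≤ M 1 1 := by
    by_contra h
    push_neg at h
    have h0 : M 1 1 = 0 := by omega
    rw [h0, mul_zero] at had; omega
  have hb1 : 1 ≤ M 0 1 := by
    by_contra h
    push_neg at h
    have h0 : M 0 1 = 0 := by omega
    rw [h0, zero_mul] at hdet
    have hprod : M 0 0 * M 1 1 = 1 := by linarith
    have hA : M 0 0 ≤ 1 := by nlinarith
    have hD : M 1 1 ≤ 1 := by nlinarith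
    omega
  have hc1 : 1 ≤ M 1 0 := by
    by_contra h
    push_neg at h
    have h0 : M 1 0 = 0 := by omega
    rw [h0, mul_zero] at hdet
    have hprod : M 0 0 * M 1 1 = 1 := by linarith
    have hA : M 0 0 ≤ 1 := by nlinarith
    have hD : M 1 1 ≤ 1 := by nlinarith
    omega
  exact ⟨ha1, hb1, hc1, hd1, htr, by linarith⟩

lemma perk (m k : ℕ) (h3 : 3 ≤ k) (hkm : k ≤ m) :
    {M : Matrix (Fin 2) (Fin 2) ℤ |
        M.det = 1 ∧ (∀ i j, 0 ≤ M i j) ∧ M.trace = (k : ℤ)}.ncard ≤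
      ((Wf m).filter (fun p => p.1 + p.2.1 = k)).card := by
  set S := {M : Matrix (Fin 2) (Fin 2) ℤ |
      M.det = 1 ∧ (∀ i j, 0 ≤ M i j) ∧ M.trace = (k : ℤ)} with hS
  set F : Matrix (Fin 2) (Fin 2) ℤ → ℕ × ℕ × ℕ × Bool :=
    fun M => ((M 0 0).toNat, (M 1 1).toNat, (min (M 0 1) (M 1 0)).toNat,
      decide (M 0 1 ≤ M 1 0)) with hF
  have hmem : ∀ M ∈ S, F M ∈ (Wf m).filter (fun p => p.1 + p.2.1 = k) := by
    rintro M ⟨hdet, hpos, htr⟩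
    obtain ⟨ha1, hb1, hc1, hd1, hsum, hprod⟩ := entries h3 hdet hpos htr
    have hkZ : ((k : ℕ) : ℤ) ≤ (m : ℤ) := by exact_mod_cast hkm
    have haM : M 0 0 ≤ (m : ℤ) := by linarith
    have hdM : M 1 1 ≤ (m : ℤ) := by linarith
    have he1 : 1 ≤ min (M 0 1) (M 1 0) := le_min hb1 hc1
    have hee : min (M 0 1) (M 1 0) * min (M 0 1) (M 1 0) ≤ M 0 0 * M 1 1 - 1 := by
      calc min (M 0 1) (M 1 0) * min (M 0 1) (M 1 0)
          ≤ M 0 1 * M 1 0 :=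
            mul_le_mul (min_le_left _ _) (min_le_right _ _) (by linarith) (by linarith)
        _ = _ := hprod
    have hmm : M 0 0 * M 1 1 ≤ (m : ℤ) * m :=
      mul_le_mul haM hdM (by linarith) (by positivity)
    have heM : min (M 0 1) (M 1 0) ≤ (m : ℤ) := by
      nlinarith [hee, he1, hmm]
    have hdvd : min (M 0 1) (M 1 0) ∣ M 0 0 * M 1 1 - 1 := by
      rw [← hprod]
      rcases min_choice (M 0 1) (M 1 0) with h | h
      · rw [h]; exact dvd_mul_right _ _
      · rw [h]; exact dvd_mul_left _ _
    have hA : ((M 0 0).toNat : ℤ) = M 0 0 := Int.toNat_of_nonneg (by linarith)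
    have hD : ((M 1 1).toNat : ℤ) = M 1 1 := Int.toNat_of_nonneg (by linarith)
    have hE : ((min (M 0 1) (M 1 0)).toNat : ℤ) = min (M 0 1) (M 1 0) :=
      Int.toNat_of_nonneg (by linarith)
    have hge : 1 ≤ (M 0 0).toNat * (M 1 1).toNat := by
      have : 1 ≤ ((M 0 0).toNat : ℤ) * ((M 1 1).toNat : ℤ) := by rw [hA, hD]; nlinarith
      exact_mod_cast this
    have hnatdvd : (min (M 0 1) (M 1 0)).toNat ∣ (M 0 0).toNat * (M 1 1).toNat - 1 := by
      have hcast : (((M 0 0).toNat * (M 1 1).toNat - 1 : ℕ) : ℤ) = M 0 0 * M 1 1 - 1 := by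
        rw [Nat.cast_sub hge, Nat.cast_mul, hA, hD, Nat.cast_one]
      have : ((min (M 0 1) (M 1 0)).toNat : ℤ) ∣
          (((M 0 0).toNat * (M 1 1).toNat - 1 : ℕ) : ℤ) := by
        rw [hcast, hE]; exact hdvd
      exact_mod_cast this
    simp only [Finset.mem_filter, Wf, Finset.mem_product, Finset.mem_Icc, hF]
    refine ⟨⟨⟨⟨?_, ?_⟩, ⟨?_, ?_⟩, ⟨?_, ?_⟩, Finset.mem_univ _⟩, hnatdvd⟩, ?_⟩
    · omega
    · omega
    · omega
    · omega
    · omega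
    · omega
    · omega
  have hinj : Set.InjOn F S := by
    rintro M ⟨hdet, hpos, htr⟩ M' ⟨hdet', hpos', htr'⟩ hFF
    obtain ⟨ha1, hb1, hc1, hd1, hsum, hprod⟩ := entries h3 hdet hpos htr
    obtain ⟨ha1', hb1', hc1', hd1', hsum', hprod'⟩ := entries h3 hdet' hpos' htr'
    simp only [hF, Prod.mk.injEq] at hFF
    obtain ⟨hA, hD, hE, hFl⟩ := hFF
    have ea : M 0 0 = M' 0 0 := by omega
    have ed : M 1 1 = M' 1 1 := by omega
    have hmn : (0 : ℤ) ≤ min (M 0 1) (M 1 0) := le_min (by linarith) (by linarith)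
    have hmn' : (0 : ℤ) ≤ min (M' 0 1) (M' 1 0) := le_min (by linarith) (by linarith)
    have hmin : min (M 0 1) (M 1 0) = min (M' 0 1) (M' 1 0) := by omega
    have hpq : M 0 1 * M 1 0 = M' 0 1 * M' 1 0 := by
      rw [hprod, hprod', ea, ed]
    have hiff : (M 0 1 ≤ M 1 0) ↔ (M' 0 1 ≤ M' 1 0) := decide_eq_decide.mp hFl
    have hbb : M 0 1 = M' 0 1 ∧ M 1 0 = M' 1 0 := by
      by_cases hcase : M 0 1 ≤ M 1 0
      · have hcase' : M' 0 1 ≤ M' 1 0 := hiff.mp hcase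
        have eb : M 0 1 = M' 0 1 := by
          rw [min_eq_left hcase, min_eq_left hcase'] at hmin; exact hmin
        refine ⟨eb, ?_⟩
        have hne : M' 0 1 ≠ 0 := by linarith
        apply mul_left_cancel₀ hne
        rw [eb] at hpq; exact hpq
      · have hcase' : ¬ (M' 0 1 ≤ M' 1 0) := fun h => hcase (hiff.mpr h)
        push_neg at hcase hcase'
        have ec : M 1 0 = M' 1 0 := by
          rw [min_eq_right hcase.le, min_eq_right hcase'.le] at hmin; exact hmin
        refine ⟨?_, ec⟩
        have hne : M' 1 0 ≠ 0 := by linarith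
        apply mul_right_cancel₀ hne
        rw [ec] at hpq; exact hpq
    ext i j
    fin_cases i <;> fin_cases j
    · exact ea
    · exact hbb.1
    · exact hbb.2
    · exact ed
  have hsub : F '' S ⊆ ↑((Wf m).filter (fun p => p.1 + p.2.1 = k)) := by
    rintro _ ⟨M, hM, rfl⟩
    exact hmem M hM
  have hfinImg : (F '' S).Finite :=
    Set.Finite.subset (Finset.finite_toSet _) hsub
  have hfinS : S.Finite := Set.Finite.of_finite_image hfinImg hinj
  calc S.ncard = (F '' S).ncard := (Set.ncard_image_of_injOn hinj).symm
    _ ≤ (((Wf m).filter (fun p => p.1 + p.2.1 = k) : Finset _) : Set _).ncard :=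
        Set.ncard_le_ncard hsub (Finset.finite_toSet _)
    _ = ((Wf m).filter (fun p => p.1 + p.2.1 = k)).card := Set.ncard_coe_finset _

theorem N_growth :
    ∃ C : ℝ, ∀ m : ℕ, 3 ≤ m →
      ((∑ k ∈ Finset.Icc 3 m,
          {M : Matrix (Fin 2) (Fin 2) ℤ |
            M.det = 1 ∧ (∀ i j, 0 ≤ M i j) ∧ M.trace = (k : ℤ)}.ncard : ℝ)) ≤
        C * m ^ 2 * Real.log m := by
  refine ⟨6, fun m hm => ?_⟩
  have h1 : (∑ k ∈ Finset.Icc 3 m,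
      {M : Matrix (Fin 2) (Fin 2) ℤ |
        M.det = 1 ∧ (∀ i j, 0 ≤ M i j) ∧ M.trace = (k : ℤ)}.ncard) ≤ (Wf m).card := by
    calc (∑ k ∈ Finset.Icc 3 m,
        {M : Matrix (Fin 2) (Fin 2) ℤ |
          M.det = 1 ∧ (∀ i j, 0 ≤ M i j) ∧ M.trace = (k : ℤ)}.ncard)
        ≤ ∑ k ∈ Finset.Icc 3 m, ((Wf m).filter (fun p => p.1 + p.2.1 = k)).card := by
          apply Finset.sum_le_sum
          intro k hk
          rw [Finset.mem_Icc] at hk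
          exact perk m k hk.1 hk.2
      _ = ((Finset.Icc 3 m).biUnion
            (fun k => (Wf m).filter (fun p => p.1 + p.2.1 = k))).card := by
          rw [Finset.card_biUnion]
          intro x _ y _ hxy
          rw [Function.onFun, Finset.disjoint_left]
          rintro p hp hp'
          rw [Finset.mem_filter] at hp hp'
          exact hxy (hp.2 ▸ hp'.2)
      _ ≤ (Wf m).card :=
          Finset.card_le_card (Finset.biUnion_subset.mpr
            (fun k _ => Finset.filter_subset _ _))
  calc (∑ k ∈ Finset.Icc 3 m,
      ({M : Matrix (Fin 2) (Fin 2) ℤ |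
        M.det = 1 ∧ (∀ i j, 0 ≤ M i j) ∧ M.trace = (k : ℤ)}.ncard : ℝ))
      = ((∑ k ∈ Finset.Icc 3 m,
        {M : Matrix (Fin 2) (Fin 2) ℤ |
          M.det = 1 ∧ (∀ i j, 0 ≤ M i j) ∧ M.trace = (k : ℤ)}.ncard : ℕ) : ℝ) :=
        (Nat.cast_sum _ _).symm
    _ ≤ ((Wf m).card : ℝ) := Nat.cast_le.mpr h1
    _ ≤ ((∑ a ∈ Finset.Icc 1 m, ∑ e ∈ Finset.Icc 1 m, 2 * (m / e + 1) : ℕ) : ℝ) :=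
        Nat.cast_le.mpr (cardW m)
    _ ≤ 6 * (m : ℝ) ^ 2 * Real.log m := realbound m hm
end
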